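/- Let p be an odd prime and let M(p) be the modular group of order p^3. Then the automorphism group of M(p) has order (p-1)·p^3. -/

import Mathlib

/-!
For an odd prime `p`, the modular group `M(p)` of order `p^3` is the semidirect product
`ZMod (p^2) ⋊ ZMod p`, where the generator of `ZMod p` acts on `ZMod (p^2)` by
multiplication by the unit `1 + p`.
-/

namespace ModularP

/-- The unit `1 + p` of `ZMod (p^2)`. -/
def u (p : ℕ) : (ZMod (p ^ 2))ˣ :=
  ZMod.unitOfCoprime (1 + p) (by
    simpa [Nat.add_comm] using (Nat.coprime_succ_self p).pow_right 2)

lemma pmul (p : ℕ) : ((p : ZMod (p ^ 2)) * p) = 0 := by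
  have h : (((p * p : ℕ)) : ZMod (p ^ 2)) = 0 := by
    rw [← pow_two]; exact ZMod.natCast_self _
  push_cast at h
  exact h

lemma one_add_sq_zero_pow {R : Type*} [CommRing R] (x : R) (hx : x * x = 0) (n : ℕ) :
    (1 + x) ^ n = 1 + (n : R) * x := by
  induction n with
  | zero => simp
  | succ n ih =>
      have key : (1 + (n : R) * x) * (1 + x) = 1 + ((n : R) + 1) * x + (n : R) * (x * x) := by
        ring
      rw [pow_succ, ih, key, hx, mul_zero, add_zero]
      push_cast
      ring

/-- The unit `1 + p` has multiplicative order dividing `p` in `(ZMod (p^2))ˣ`. -/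
lemma u_pow (p : ℕ) : u p ^ p = 1 := by
  ext
  have hc : (u p : ZMod (p ^ 2)) = 1 + p := by simp [u]
  rw [Units.val_pow_eq_pow_val, hc, one_add_sq_zero_pow _ (pmul p), pmul, add_zero,
    Units.val_one]

/-- Units of `ZMod n` acting as multiplicative automorphisms of `Multiplicative (ZMod n)`. -/
def unitsToMulAut (n : ℕ) : (ZMod n)ˣ →* MulAut (Multiplicative (ZMod n)) where
  toFun c := AddEquiv.toMultiplicative (DistribMulAction.toAddAut (ZMod n)ˣ (ZMod n) c)
  map_one' := by ext x; simp
  map_mul' c d := by ext x; simp [mul_smul]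

/-- The action of `ZMod p` on `ZMod (p^2)` in which `k` acts by multiplication
by `(1+p)^k`. -/
def actionHom (p : ℕ) : Multiplicative (ZMod p) →* MulAut (Multiplicative (ZMod (p ^ 2))) :=
  AddMonoidHom.toMultiplicativeLeft
    (ZMod.lift p ⟨zmultiplesHom _ (Additive.ofMul (unitsToMulAut (p ^ 2) (u p))), by
      show (p : ℤ) • Additive.ofMul (unitsToMulAut (p ^ 2) (u p)) = 0
      rw [← ofMul_zpow, zpow_natCast, ← map_pow, u_pow, map_one]
      rfl⟩)

/-- The modular group `M(p)` of order `p^3`:  the semidirect product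
`(ZMod (p^2)) ⋊ (ZMod p)` where the generator of `ZMod p` acts on `ZMod (p^2)` by
multiplication by `1 + p`; equivalently `⟨a, b | a^(p^2) = 1, b^p = 1, b a b⁻¹ = a^(1+p)⟩`. -/
abbrev M (p : ℕ) : Type :=
  SemidirectProduct (Multiplicative (ZMod (p ^ 2))) (Multiplicative (ZMod p)) (actionHom p)

end ModularP

set_option linter.unusedSectionVars false

namespace CardAutAux
open ModularP Multiplicative

variable {p : ℕ} [hp : Fact p.Prime]

instance : NeZero p := ⟨hp.out.ne_zero⟩
instance : NeZero (p ^ 2) := ⟨pow_ne_zero _ hp.out.ne_zero⟩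

lemma actionHom_apply (k : ZMod p) (m : ZMod (p ^ 2)) :
    actionHom p (ofAdd k) (ofAdd m) = ofAdd ((1 + (p : ZMod (p ^ 2)) * k.val) * m) := by
  have : actionHom p (ofAdd k) =
      unitsToMulAut (p ^ 2) (u p ^ k.val) := by
    have hk : ((k.val : ℤ) : ZMod p) = k := by
      rw [Int.cast_natCast, ZMod.natCast_val, ZMod.cast_id]
    show AddMonoidHom.toMultiplicativeLeft
      (ZMod.lift p ⟨zmultiplesHom _ (Additive.ofMul (unitsToMulAut (p ^ 2) (u p))), _⟩) (ofAdd k) = _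
    rw [AddMonoidHom.coe_toMultiplicativeLeft]
    simp only [Function.comp_apply, toAdd_ofAdd]
    conv_lhs => rw [← hk]
    rw [ZMod.lift_coe]
    show Additive.toMul ((k.val : ℤ) • Additive.ofMul (unitsToMulAut (p ^ 2) (u p))) = _
    rw [← ofMul_zpow, zpow_natCast, ← map_pow]
    rfl
  rw [this]
  show AddEquiv.toMultiplicative (Multiplicative.toAdd (DistribMulAction.toAddAut (ZMod (p^2))ˣ (ZMod (p^2)) (u p ^ k.val))) (ofAdd m) = _
  have : (u p ^ k.val : (ZMod (p^2))ˣ) • m = (1 + (p : ZMod (p ^ 2)) * k.val) * m := by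
    have hc : ((u p ^ k.val : (ZMod (p^2))ˣ) : ZMod (p^2)) = 1 + (p : ZMod (p ^ 2)) * k.val := by
      rw [Units.val_pow_eq_pow_val]
      have : (u p : ZMod (p ^ 2)) = 1 + p := by simp [u]
      rw [this, one_add_sq_zero_pow _ (pmul p)]
      ring
    rw [Units.smul_def, smul_eq_mul, hc]
  exact this



end CardAutAux

set_option linter.unusedSectionVars false

namespace CardAutAux2
open ModularP Multiplicative CardAutAux

variable {p : ℕ} [hp : Fact p.Prime]

/-- Convenient constructor for elements of `M p`. -/
def mk (m : ZMod (p ^ 2)) (k : ZMod p) : M p := ⟨ofAdd m, ofAdd k⟩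

lemma mk_surj (z : M p) : ∃ m k, z = mk m k := ⟨z.left.toAdd, z.right.toAdd, rfl⟩

lemma mk_inj {m m' : ZMod (p ^ 2)} {k k' : ZMod p} (h : mk m k = mk m' k') :
    m = m' ∧ k = k' := by
  unfold mk at h
  injection h with h1 h2
  exact ⟨ofAdd.injective h1, ofAdd.injective h2⟩

lemma one_def : (1 : M p) = mk 0 0 := rfl

lemma mul_mk (m m' : ZMod (p ^ 2)) (k k' : ZMod p) :
    mk m k * mk m' k' =
      mk (m + (1 + (p : ZMod (p ^ 2)) * (k.val : ZMod (p ^ 2))) * m') (k + k') := by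
  show (⟨ofAdd m * actionHom p (ofAdd k) (ofAdd m'), ofAdd k * ofAdd k'⟩ : M p) = _
  rw [actionHom_apply, ← ofAdd_add, ← ofAdd_add]
  rfl

lemma pmul_val (a : ℕ) : (p : ZMod (p ^ 2)) * (((a : ZMod p)).val : ZMod (p ^ 2))
    = (p : ZMod (p ^ 2)) * (a : ZMod (p ^ 2)) := by
  conv_rhs => rw [← Nat.div_add_mod a p]
  rw [ZMod.val_natCast]
  push_cast
  rw [mul_add, ← mul_assoc, pmul, zero_mul, zero_add]

lemma val_zmod_cast (m : ZMod (p ^ 2)) : ((m.val : ℕ) : ZMod (p ^ 2)) = m := by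
  rw [ZMod.natCast_val, ZMod.cast_id]

lemma val_zmodp_cast (k : ZMod p) : ((k.val : ℕ) : ZMod p) = k := by
  rw [ZMod.natCast_val, ZMod.cast_id]

lemma pow_mk (m : ZMod (p ^ 2)) (k : ZMod p) (t : ℕ) :
    (mk m k) ^ t =
      mk (((t : ZMod (p ^ 2)) + (p : ZMod (p ^ 2)) * (t.choose 2 : ZMod (p ^ 2))
          * (k.val : ZMod (p ^ 2))) * m)
        ((t : ZMod p) * k) := by
  induction t with
  | zero => simp [one_def]
  | succ t ih =>
      rw [pow_succ, ih, mul_mk]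
      have hval : (p : ZMod (p ^ 2)) * ((((t : ZMod p) * k)).val : ZMod (p ^ 2))
          = (p : ZMod (p ^ 2)) * (t : ZMod (p ^ 2)) * (k.val : ZMod (p ^ 2)) := by
        have h1 : ((t : ZMod p) * k) = ((t * k.val : ℕ) : ZMod p) := by
          push_cast [val_zmodp_cast]
          rfl
        rw [h1, pmul_val]
        push_cast
        ring
      have hch : ((t + 1).choose 2 : ℕ) = (t.choose 2 + t : ℕ) := by
        rw [Nat.choose_succ_succ, Nat.choose_one_right, Nat.add_comm]
      congr 1
      · rw [hval, hch]
        push_cast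
        ring
      · push_cast
        ring

lemma cast_mul_pred (N : ℕ) :
    ((N * (N - 1) : ℕ) : ZMod p) = (N : ZMod p) * ((N : ZMod p) - 1) := by
  cases N with
  | zero => simp
  | succ n => push_cast [Nat.succ_sub_one]; ring

lemma two_mul_choose (N : ℕ) : 2 * N.choose 2 = N * (N - 1) := by
  rw [Nat.choose_two_right]
  refine Nat.mul_div_cancel' ?_
  cases N with
  | zero => simp
  | succ n => simpa [Nat.succ_sub_one, Nat.mul_comm] using (Nat.even_mul_succ_self n).two_dvd

lemma two_ne_zero' (ho : Odd p) : (2 : ZMod p) ≠ 0 := by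
  have : ((2 : ℕ) : ZMod p) ≠ 0 := by
    rw [Ne, ZMod.natCast_eq_zero_iff]
    intro hdvd
    have := (Nat.prime_dvd_prime_iff_eq hp.out Nat.prime_two).mp hdvd
    rw [this, Nat.odd_iff] at ho
    simp at ho
  simpa using this

lemma pchoose_congr (ho : Odd p) {N K : ℕ} (h : (N : ZMod p) = (K : ZMod p)) :
    (p : ZMod (p ^ 2)) * (N.choose 2 : ZMod (p ^ 2))
      = (p : ZMod (p ^ 2)) * (K.choose 2 : ZMod (p ^ 2)) := by
  rw [← pmul_val (N.choose 2), ← pmul_val (K.choose 2)]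
  suffices hs : ((N.choose 2 : ZMod p)) = (K.choose 2 : ZMod p) by rw [hs]
  have key : ((2 * N.choose 2 : ℕ) : ZMod p) = ((2 * K.choose 2 : ℕ) : ZMod p) := by
    rw [two_mul_choose, two_mul_choose, cast_mul_pred, cast_mul_pred, h]
  push_cast at key
  exact mul_left_cancel₀ (two_ne_zero' ho) key

lemma pchoose_zero (ho : Odd p) {N : ℕ} (h : (N : ZMod p) = 0) :
    (p : ZMod (p ^ 2)) * (N.choose 2 : ZMod (p ^ 2)) = 0 := by
  have := pchoose_congr ho (K := 0) (by simpa using h)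
  simpa using this

lemma pow_p (ho : Odd p) (m : ZMod (p ^ 2)) (k : ZMod p) :
    (mk m k) ^ p = mk ((p : ZMod (p ^ 2)) * m) 0 := by
  rw [pow_mk]
  congr 1
  · rw [pchoose_zero ho (by simp)]
    ring
  · simp

lemma pow_p2 (ho : Odd p) (m : ZMod (p ^ 2)) (k : ZMod p) :
    (mk m k) ^ (p ^ 2) = 1 := by
  rw [pow_mk, one_def]
  congr 1
  · have hps : ((p ^ 2 : ℕ) : ZMod (p ^ 2)) = 0 := ZMod.natCast_self _
    rw [pchoose_zero ho (by push_cast; simp)]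
    push_cast at hps ⊢
    rw [hps]
    ring
  · push_cast
    simp

lemma pow_one_add_p (ho : Odd p) (m : ZMod (p ^ 2)) (k : ZMod p) :
    (mk m k) ^ (1 + p) = mk ((1 + (p : ZMod (p ^ 2))) * m) k := by
  rw [pow_mk]
  have h1 : (((1 + p : ℕ)) : ZMod p) = 1 := by push_cast; simp
  have h2 : (p : ZMod (p ^ 2)) * ((1 + p).choose 2 : ZMod (p ^ 2)) = 0 := by
    have := pchoose_congr ho (N := 1 + p) (K := 1) (by push_cast; simp)
    simpa using this
  congr 1
  · rw [h2]
    push_cast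
    ring
  · rw [h1, one_mul]

/-- The hom from `Multiplicative (ZMod n)` sending the generator to an element `x`
with `x ^ n = 1`. -/
def powHom (n : ℕ) {H : Type*} [Group H] (x : H) (hx : x ^ n = 1) :
    Multiplicative (ZMod n) →* H :=
  AddMonoidHom.toMultiplicativeLeft
    (ZMod.lift n ⟨MonoidHom.toAdditiveRight (zpowersHom H x), by
      show Additive.ofMul (zpowersHom H x (Multiplicative.ofAdd (n : ℤ))) = 0
      rw [zpowersHom_apply, toAdd_ofAdd, zpow_natCast, hx]
      rfl⟩)

lemma powHom_apply (n : ℕ) [NeZero n] {H : Type*} [Group H] (x : H) (hx : x ^ n = 1)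
    (c : ZMod n) : powHom n x hx (ofAdd c) = x ^ c.val := by
  unfold powHom
  rw [AddMonoidHom.coe_toMultiplicativeLeft]
  simp only [Function.comp_apply, toAdd_ofAdd]
  have hc : ((c.val : ℤ) : ZMod n) = c := by
    rw [Int.cast_natCast, ZMod.natCast_val, ZMod.cast_id]
  conv_lhs => rw [← hc]
  rw [ZMod.lift_coe, MonoidHom.coe_toAdditiveRight]
  simp only [Function.comp_apply]
  rw [zpowersHom_apply]
  show x ^ ((c.val : ℤ)) = x ^ c.val
  rw [zpow_natCast]

lemma powHom_apply' (n : ℕ) [NeZero n] {H : Type*} [Group H] (x : H) (hx : x ^ n = 1)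
    (c : Multiplicative (ZMod n)) : powHom n x hx c = x ^ c.toAdd.val :=
  powHom_apply n x hx c.toAdd

lemma actionHom_apply' (g : Multiplicative (ZMod p)) (z : Multiplicative (ZMod (p ^ 2))) :
    actionHom p g z
      = ofAdd ((1 + (p : ZMod (p ^ 2)) * (g.toAdd.val : ZMod (p ^ 2))) * z.toAdd) :=
  actionHom_apply g.toAdd z.toAdd

/-- Generator `a`. -/
def gA : M p := mk 1 0

/-- Generator `b`. -/
def gB : M p := mk 0 1

lemma gen_eq (m : ZMod (p ^ 2)) (k : ZMod p) :
    mk m k = gA ^ m.val * gB ^ k.val := by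
  rw [gA, gB, pow_mk, pow_mk, mul_mk]
  congr 1
  · simp [val_zmod_cast]
  · simp [val_zmodp_cast]

section Params

variable (w : (ZMod (p ^ 2))ˣ) (r s : ZMod p)

/-- Image of generator `a`. -/
def X : M p := mk (w : ZMod (p ^ 2)) r

/-- Image of generator `b`. -/
def Y : M p := mk ((p : ZMod (p ^ 2)) * (s.val : ZMod (p ^ 2))) 1

lemma X_pow_card (ho : Odd p) : X w r ^ (p ^ 2) = 1 := pow_p2 ho _ _

lemma Y_pow_p (ho : Odd p) : Y s ^ p = 1 := by
  rw [Y, pow_p ho, one_def]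
  congr 1
  linear_combination ((s.val : ZMod (p ^ 2))) * pmul p

lemma Y_pow (T : ℕ) :
    Y s ^ T = mk ((p : ZMod (p ^ 2)) * (s.val : ZMod (p ^ 2)) * (T : ZMod (p ^ 2))) ((T : ZMod p)) := by
  haveI : Fact (1 < p) := ⟨hp.out.one_lt⟩
  rw [Y, pow_mk, ZMod.val_one]
  congr 1
  · push_cast
    linear_combination ((T.choose 2 : ZMod (p ^ 2)) * (s.val : ZMod (p ^ 2))) * pmul p
  · rw [mul_one]

lemma conj_X (T : ℕ) :
    Y s ^ T * X w r * (Y s ^ T)⁻¹ = mk ((1 + (p : ZMod (p ^ 2)) * (T : ZMod (p ^ 2))) * (w : ZMod (p ^ 2))) r := by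
  rw [mul_inv_eq_iff_eq_mul, Y_pow, X, mul_mk, mul_mk]
  congr 1
  · rw [pmul_val]
    linear_combination (-((r.val : ZMod (p ^ 2)) * (s.val : ZMod (p ^ 2)) * (T : ZMod (p ^ 2)))) * pmul p
  · rw [add_comm]

/-- Reduction `ZMod (p^2) → ZMod p`. -/
noncomputable def down : ZMod (p ^ 2) →+* ZMod p :=
  ZMod.castHom (dvd_pow_self p two_ne_zero) (ZMod p)

lemma down_natCast (a : ℕ) : down ((a : ZMod (p ^ 2))) = (a : ZMod p) := map_natCast _ _

lemma down_val (m : ZMod (p ^ 2)) : down m = ((m.val : ℕ) : ZMod p) := by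
  conv_lhs => rw [← val_zmod_cast m]
  rw [down_natCast]

lemma down_p : down ((p : ZMod (p ^ 2))) = 0 := by rw [down_natCast, ZMod.natCast_self]

lemma compat (ho : Odd p) : ∀ g : Multiplicative (ZMod p),
    (powHom (p ^ 2) (X w r) (X_pow_card w r ho)).comp ((actionHom p g).toMonoidHom)
      = (MulAut.conj ((powHom p (Y s) (Y_pow_p s ho)) g)).toMonoidHom.comp
          (powHom (p ^ 2) (X w r) (X_pow_card w r ho)) := by
  intro g
  refine MonoidHom.ext fun z => ?_
  simp only [MonoidHom.comp_apply, MulEquiv.coe_toMonoidHom]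
  set t : ZMod p := g.toAdd with ht
  set m : ZMod (p ^ 2) := z.toAdd with hm
  rw [actionHom_apply', powHom_apply', powHom_apply', powHom_apply', map_pow, toAdd_ofAdd,
    ← ht, ← hm]
  have hc : MulAut.conj (Y s ^ t.val) (X w r)
      = mk ((1 + (p : ZMod (p ^ 2)) * (t.val : ZMod (p ^ 2))) * (w : ZMod (p ^ 2))) r := by
    rw [MulAut.conj_apply, conj_X]
  rw [hc, X, pow_mk, pow_mk]
  set N : ℕ := (((1 + (p : ZMod (p ^ 2)) * (t.val : ZMod (p ^ 2))) * m)).val with hNdef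
  have hN2 : ((N : ℕ) : ZMod (p ^ 2))
      = (1 + (p : ZMod (p ^ 2)) * (t.val : ZMod (p ^ 2))) * m := val_zmod_cast _
  have hNp : ((N : ℕ) : ZMod p) = ((m.val : ℕ) : ZMod p) := by
    have h2 := congrArg down hN2
    rw [down_natCast] at h2
    rw [h2, map_mul, map_add, map_one, map_mul, down_p, zero_mul, add_zero, one_mul, down_val]
  have hch : (p : ZMod (p ^ 2)) * (N.choose 2 : ZMod (p ^ 2))
      = (p : ZMod (p ^ 2)) * ((m.val).choose 2 : ZMod (p ^ 2)) := pchoose_congr ho hNp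
  congr 1
  · rw [hch, hN2, val_zmod_cast m]
    linear_combination (-(((m.val).choose 2 : ZMod (p ^ 2)) * (r.val : ZMod (p ^ 2))
      * (t.val : ZMod (p ^ 2)) * (w : ZMod (p ^ 2)))) * pmul p
  · rw [hNp]

/-- The endomorphism of `M p` determined by the parameters. -/
noncomputable def F (ho : Odd p) : M p →* M p :=
  SemidirectProduct.lift (powHom (p ^ 2) (X w r) (X_pow_card w r ho))
    (powHom p (Y s) (Y_pow_p s ho)) (compat w r s ho)

lemma F_mk (ho : Odd p) (m : ZMod (p ^ 2)) (k : ZMod p) :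
    F w r s ho (mk m k) = X w r ^ m.val * Y s ^ k.val := by
  have : (mk m k : M p) = SemidirectProduct.inl (ofAdd m) * SemidirectProduct.inr (ofAdd k) :=
    SemidirectProduct.mk_eq_inl_mul_inr _ _
  rw [this, map_mul, F, SemidirectProduct.lift_inl, SemidirectProduct.lift_inr,
    powHom_apply, powHom_apply]

lemma F_mk_expand (ho : Odd p) (m : ZMod (p ^ 2)) (k : ZMod p) :
    F w r s ho (mk m k) =
      mk (((m.val : ZMod (p ^ 2))
            + (p : ZMod (p ^ 2)) * ((m.val).choose 2 : ZMod (p ^ 2)) * (r.val : ZMod (p ^ 2)))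
              * (w : ZMod (p ^ 2))
          + (1 + (p : ZMod (p ^ 2)) * ((((m.val : ZMod p) * r)).val : ZMod (p ^ 2)))
              * ((p : ZMod (p ^ 2)) * (s.val : ZMod (p ^ 2)) * (k.val : ZMod (p ^ 2))))
        ((m.val : ZMod p) * r + (k.val : ZMod p)) := by
  rw [F_mk w r s ho, X, pow_mk, Y_pow, mul_mk]

lemma F_inj (ho : Odd p) : Function.Injective (F w r s ho) := by
  haveI : Fact (1 < p) := ⟨hp.out.one_lt⟩
  rw [injective_iff_map_eq_one]
  intro z hz
  obtain ⟨m, k, rfl⟩ := mk_surj z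
  rw [F_mk_expand w r s ho, one_def] at hz
  obtain ⟨h1, h2⟩ := mk_inj hz
  -- reduce h1 mod p
  have hdown := congrArg down h1
  have hwu : down ((w : ZMod (p ^ 2))) ≠ 0 := by
    intro h0
    have : IsUnit (down ((w : ZMod (p ^ 2)))) := (w.isUnit).map down
    rw [h0] at this
    exact this.ne_zero rfl
  have hm0 : ((m.val : ℕ) : ZMod p) = 0 := by
    simp only [map_add, map_mul, map_one, down_p, down_natCast, zero_mul, mul_zero,
      add_zero, zero_add, map_zero] at hdown
    rcases mul_eq_zero.mp hdown with h | h
    · exact h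
    · exact absurd h hwu
  have hk : k = 0 := by
    rw [hm0, zero_mul, zero_add] at h2
    rw [← val_zmodp_cast k, h2]
  subst hk
  have hC : (p : ZMod (p ^ 2)) * ((m.val).choose 2 : ZMod (p ^ 2)) = 0 := pchoose_zero ho hm0
  have hm : m = 0 := by
    rw [ZMod.val_zero, Nat.cast_zero, mul_zero, mul_zero, add_zero, hC, zero_mul, add_zero,
      val_zmod_cast m] at h1
    exact (Units.mul_left_eq_zero w).mp h1
  rw [one_def, hm]

lemma F_gA (ho : Odd p) : F w r s ho gA = X w r := by
  haveI : Fact (1 < p ^ 2) :=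
    ⟨Nat.one_lt_pow (by norm_num) hp.out.one_lt⟩
  rw [gA, F_mk w r s ho, ZMod.val_one, ZMod.val_zero, pow_one, pow_zero, mul_one]

lemma F_gB (ho : Odd p) : F w r s ho gB = Y s := by
  haveI : Fact (1 < p) := ⟨hp.out.one_lt⟩
  rw [gB, F_mk w r s ho, ZMod.val_one, ZMod.val_zero, pow_zero, pow_one, one_mul]

end Params

instance : Finite (M p) :=
  Finite.of_injective (fun z : M p => (z.left, z.right))
    (fun a b h => SemidirectProduct.ext (congrArg Prod.fst h) (congrArg Prod.snd h))

/-- The automorphism of `M p` determined by the parameters. -/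
noncomputable def Phi (w : (ZMod (p ^ 2))ˣ) (r s : ZMod p) (ho : Odd p) : MulAut (M p) :=
  MulEquiv.ofBijective (F w r s ho) ((Finite.injective_iff_bijective).mp (F_inj w r s ho))

lemma Phi_apply (w : (ZMod (p ^ 2))ˣ) (r s : ZMod p) (ho : Odd p) (z : M p) :
    Phi w r s ho z = F w r s ho z := rfl

lemma psv_inj {s s' : ZMod p}
    (h : (p : ZMod (p ^ 2)) * (s.val : ZMod (p ^ 2))
       = (p : ZMod (p ^ 2)) * (s'.val : ZMod (p ^ 2))) : s = s' := by
  have hlt : ∀ x : ZMod p, p * x.val < p ^ 2 := fun x => by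
    have h1 := ZMod.val_lt x
    have h2 := hp.out.pos
    nlinarith [sq_nonneg p]
  have hc : ((p * s.val : ℕ) : ZMod (p ^ 2)) = ((p * s'.val : ℕ) : ZMod (p ^ 2)) := by
    push_cast
    exact h
  have hv := congrArg ZMod.val hc
  rw [ZMod.val_cast_of_lt (hlt s), ZMod.val_cast_of_lt (hlt s')] at hv
  exact ZMod.val_injective p (Nat.eq_of_mul_eq_mul_left hp.out.pos hv)

/-- The parametrization of automorphisms of `M p`. -/
noncomputable def paramMap (ho : Odd p) :
    (ZMod (p ^ 2))ˣ × ZMod p × ZMod p → MulAut (M p) :=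
  fun q => Phi q.1 q.2.1 q.2.2 ho

lemma paramMap_inj (ho : Odd p) : Function.Injective (paramMap (p := p) ho) := by
  rintro ⟨w, r, s⟩ ⟨w', r', s'⟩ h
  have hA : X w r = X w' r' := by
    have := congrArg (fun φ : MulAut (M p) => φ gA) h
    simpa only [paramMap, Phi_apply, F_gA] using this
  have hB : Y (p := p) s = Y s' := by
    have := congrArg (fun φ : MulAut (M p) => φ gB) h
    simpa only [paramMap, Phi_apply, F_gB] using this
  obtain ⟨hw, hr⟩ := mk_inj hA
  obtain ⟨hsv, -⟩ := mk_inj hB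
  have hs : s = s' := psv_inj hsv
  have hww : w = w' := Units.ext hw
  rw [hww, hr, hs]

lemma paramMap_surj (ho : Odd p) : Function.Surjective (paramMap (p := p) ho) := by
  haveI : Fact (1 < p) := ⟨hp.out.one_lt⟩
  intro φ
  obtain ⟨m₀, r, hX0⟩ := mk_surj (φ gA)
  obtain ⟨n₀, l, hY0⟩ := mk_surj (φ gB)
  -- `gB ^ p = 1`, hence `p * n₀ = 0`
  have hgBp : (gB : M p) ^ p = 1 := by
    rw [gB, pow_p ho, mul_zero, one_def]
  have hYp : mk ((p : ZMod (p ^ 2)) * n₀) 0 = 1 := by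
    rw [← pow_p ho, ← hY0, ← map_pow, hgBp, map_one]
  rw [one_def] at hYp
  have hn0 : (p : ZMod (p ^ 2)) * n₀ = 0 := (mk_inj hYp).1
  have hdvd : p ∣ n₀.val := by
    have hc : ((p * n₀.val : ℕ) : ZMod (p ^ 2)) = 0 := by
      push_cast [val_zmod_cast]
      exact hn0
    rw [ZMod.natCast_eq_zero_iff] at hc
    have hc2 : p * p ∣ p * n₀.val := by rw [← pow_two]; exact hc
    exact (Nat.mul_dvd_mul_iff_left hp.out.pos).mp hc2
  obtain ⟨s, hsval⟩ : ∃ s : ZMod p, (p : ZMod (p ^ 2)) * (s.val : ZMod (p ^ 2)) = n₀ := by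
    refine ⟨((n₀.val / p : ℕ) : ZMod p), ?_⟩
    have hlt : n₀.val / p < p := by
      refine Nat.div_lt_of_lt_mul ?_
      rw [← pow_two]
      exact ZMod.val_lt n₀
    have hmd : p * (n₀.val / p) = n₀.val := Nat.mul_div_cancel' hdvd
    rw [ZMod.val_cast_of_lt hlt,
      show (p : ZMod (p ^ 2)) * ((n₀.val / p : ℕ) : ZMod (p ^ 2))
        = ((p * (n₀.val / p) : ℕ) : ZMod (p ^ 2)) by push_cast; ring,
      hmd, val_zmod_cast]
  -- `gA ^ p ≠ 1`, hence `m₀` is a unit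
  have hplt : p < p ^ 2 := by nlinarith [hp.out.two_le]
  have hgAp : (gA : M p) ^ p ≠ 1 := by
    rw [gA, pow_p ho, mul_one, one_def]
    intro h
    have h1 := (mk_inj h).1
    rw [ZMod.natCast_eq_zero_iff] at h1
    exact absurd (Nat.le_of_dvd hp.out.pos h1) (not_le.mpr hplt)
  have hpm0 : (p : ZMod (p ^ 2)) * m₀ ≠ 0 := by
    intro h0
    apply hgAp
    apply φ.injective
    rw [map_pow, hX0, pow_p ho, map_one, h0, one_def]
  have hnd : ¬ p ∣ m₀.val := by
    intro hd
    apply hpm0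
    obtain ⟨c, hc⟩ := hd
    have hcc : ((p * (p * c) : ℕ) : ZMod (p ^ 2)) = 0 := by
      rw [show p * (p * c) = p ^ 2 * c by ring, Nat.cast_mul, ZMod.natCast_self, zero_mul]
    rw [← val_zmod_cast m₀, hc]
    push_cast at hcc ⊢
    exact hcc
  have hm0unit : IsUnit m₀ := by
    rw [← val_zmod_cast m₀, ZMod.isUnit_iff_coprime]
    exact Nat.Coprime.pow_right 2 (Nat.coprime_comm.mp ((hp.out.coprime_iff_not_dvd).mpr hnd))
  obtain ⟨w, hw⟩ := hm0unit
  -- the defining relation forces `l = 1`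
  have hrel : (gB : M p) * gA = gA ^ (1 + p) * gB := by
    show mk 0 1 * mk 1 0 = (mk 1 0 : M p) ^ (1 + p) * mk 0 1
    rw [pow_one_add_p ho, mul_mk, mul_mk, ZMod.val_one, ZMod.val_zero]
    congr 1
    · push_cast
      ring
    · rw [add_comm]
  have hrelφ := congrArg φ hrel
  rw [map_mul, map_mul, map_pow, hX0, hY0, pow_one_add_p ho, mul_mk, mul_mk] at hrelφ
  obtain ⟨hL, -⟩ := mk_inj hrelφ
  have hl1 : l = 1 := by
    have h5 : ((p : ZMod (p ^ 2)) * (l.val : ZMod (p ^ 2)) - p) * (w : ZMod (p ^ 2)) = 0 := by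
      rw [← hsval] at hL
      rw [← hw] at hL
      linear_combination hL + ((r.val : ZMod (p ^ 2)) * (s.val : ZMod (p ^ 2))) * pmul p
    have h6 : (p : ZMod (p ^ 2)) * (l.val : ZMod (p ^ 2)) = p :=
      sub_eq_zero.mp ((Units.mul_left_eq_zero w).mp h5)
    have hc : ((p * l.val : ℕ) : ZMod (p ^ 2)) = ((p * 1 : ℕ) : ZMod (p ^ 2)) := by
      push_cast
      rw [mul_one]
      exact h6
    have hv := congrArg ZMod.val hc
    rw [ZMod.val_cast_of_lt, ZMod.val_cast_of_lt] at hv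
    · have hlv := Nat.eq_of_mul_eq_mul_left hp.out.pos hv
      rw [← val_zmodp_cast l, hlv]
      norm_num
    · rw [mul_one]
      exact hplt
    · have := ZMod.val_lt l
      nlinarith
  refine ⟨(w, r, s), ?_⟩
  refine MulEquiv.ext fun z => ?_
  obtain ⟨m, k, rfl⟩ := mk_surj z
  show F w r s ho (mk m k) = φ (mk m k)
  rw [F_mk w r s ho, gen_eq m k, map_mul, map_pow, map_pow, hX0, hY0]
  rw [show (X w r : M p) = mk m₀ r by rw [X, hw]]
  rw [show (Y s : M p) = mk n₀ l by rw [Y, hsval, hl1]]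


end CardAutAux2


open ModularP in
/-- for an odd prime `p`, the automorphism group of the modular group `M(p)`
of order `p^3` has order `(p-1) * p^3`. -/
theorem card_mulAut_modularGroup (p : ℕ) (hp : p.Prime) (hodd : Odd p) :
    Nat.card (MulAut (M p)) = (p - 1) * p ^ 3 := by
  classical
  haveI := Fact.mk hp
  have e : (ZMod (p ^ 2))ˣ × ZMod p × ZMod p ≃ MulAut (M p) :=
    Equiv.ofBijective (CardAutAux2.paramMap hodd)
      ⟨CardAutAux2.paramMap_inj hodd, CardAutAux2.paramMap_surj hodd⟩
  rw [← Nat.card_congr e, Nat.card_prod, Nat.card_prod, Nat.card_zmod,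
    Nat.card_eq_fintype_card, ZMod.card_units_eq_totient,
    Nat.totient_prime_pow hp (by norm_num), pow_one]
  ring
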